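/- Let m ∈ ℕ and x ∈ X_m. Then 𝔖(x) = ∅ if and only if m is odd and x_{2i} = x_{2i+1} for all i with 0 ≤ i ≤ (m−1)/2. -/
import Mathlib


open Finset

/-- `X_m`: sequences `(x_0,…,x_m)` in `ℕ` with `x i ≤ x (i+1)` and `x i < x (i+2)`. -/
def IsX (m : ℕ) (x : ℕ → ℕ) : Prop :=
  (∀ i, i < m → x i ≤ x (i + 1)) ∧ (∀ i, i + 2 ≤ m → x i < x (i + 2))

/-- `Y_m`: sequences with `y i ≤ y (i+1)` and `y i + 2 ≤ y (i+2)`. -/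
def IsY (m : ℕ) (y : ℕ → ℕ) : Prop :=
  (∀ i, i < m → y i ≤ y (i + 1)) ∧ (∀ i, i + 2 ≤ m → y i + 2 ≤ y (i + 2))

/-- `ℰ_m`: weakly increasing sequences. -/
def IsE (m : ℕ) (e : ℕ → ℕ) : Prop := ∀ i, i < m → e i ≤ e (i + 1)

/-- `𝔖(x)`: indices `i ∈ [0,m]` with `x (i-1) < x i < x (i+1)`,
with conventions `x_{-1} = -∞`, `x_{m+1} = +∞`. -/
def SS (m : ℕ) (x : ℕ → ℕ) : Finset ℕ :=
  (Finset.range (m + 1)).filter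
    (fun i => (i = 0 ∨ x (i - 1) < x i) ∧ (i = m ∨ x i < x (i + 1)))

/-- `𝔉(y)`: intervals `[i,j] ⊆ [0,m]` with
`y_{i-1}-(i-1) < y_i-i = ⋯ = y_j-j < y_{j+1}-(j+1)` (conventions `±∞` at the ends),
encoded as pairs `(i, j)`. -/
def FF (m : ℕ) (y : ℕ → ℕ) : Finset (ℕ × ℕ) :=
  ((Finset.range (m + 1)) ×ˢ (Finset.range (m + 1))).filter
    (fun p => p.1 ≤ p.2 ∧
      (p.1 = 0 ∨ ((y (p.1 - 1) : ℤ) - ((p.1 : ℤ) - 1) < (y p.1 : ℤ) - (p.1 : ℤ))) ∧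
      (p.2 = m ∨ ((y p.2 : ℤ) - (p.2 : ℤ) < (y (p.2 + 1) : ℤ) - ((p.2 : ℤ) + 1))) ∧
      (∀ k ∈ Finset.Ico p.1 p.2, ((y k : ℤ) - (k : ℤ) = (y (k + 1) : ℤ) - ((k : ℤ) + 1))))

/-- `𝔉'(y)`: the intervals in `𝔉(y)` of odd cardinality. -/
def FF' (m : ℕ) (y : ℕ → ℕ) : Finset (ℕ × ℕ) :=
  (FF m y).filter (fun p => Odd (p.2 - p.1 + 1))

/-- `R(y)`: endpoints of intervals in `𝔉(y)`. -/
def RR (m : ℕ) (y : ℕ → ℕ) : Finset ℕ :=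
  (Finset.range (m + 1)).filter (fun k => ∃ p ∈ FF m y, k = p.1 ∨ k = p.2)

/-- `R_0(y)`: those `k` with `[k,k] ∈ 𝔉(y)`. -/
def RR0 (m : ℕ) (y : ℕ → ℕ) : Finset ℕ :=
  (Finset.range (m + 1)).filter (fun k => (k, k) ∈ FF m y)

/-- `S(y)`: pairs `(x, x') ∈ X_m × X_m` with `x + x' = y`,
`𝔖(x) ∪ 𝔖(x') = R(y)`, `𝔖(x) ∩ 𝔖(x') = R_0(y)`, and `𝔖(x') = ∅` if `𝔉'(y) = ∅`. -/
def IsS (m : ℕ) (y x x' : ℕ → ℕ) : Prop :=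
  IsX m x ∧ IsX m x' ∧ (∀ i, i ≤ m → x i + x' i = y i) ∧
  SS m x ∪ SS m x' = RR m y ∧ SS m x ∩ SS m x' = RR0 m y ∧
  (FF' m y = ∅ → SS m x' = ∅)

theorem stmt1 (m : ℕ) (x : ℕ → ℕ) (hx : IsX m x) :
    SS m x = ∅ ↔ Odd m ∧ ∀ i ≤ (m - 1) / 2, x (2 * i) = x (2 * i + 1) := by
  obtain ⟨h1, h2⟩ := hx
  rw [SS, Finset.filter_eq_empty_iff]
  constructor
  · intro h
    have key : ∀ i, 2 * i ≤ m → 2 * i < m ∧ x (2 * i) = x (2 * i + 1) := by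
      intro i
      induction i with
      | zero =>
        intro h0
        have h0' := h (show (0:ℕ) ∈ Finset.range (m+1) from Finset.mem_range.mpr (by omega))
        simp only [not_and, not_or, not_lt] at h0'
        have := h0' (Or.inl trivial)
        have hle := h1 0
        constructor
        · omega
        · simp only [Nat.mul_zero]
          omega
      | succ n ih =>
        intro hle
        have hn : 2 * n ≤ m := by omega
        obtain ⟨hlt, heq⟩ := ih hn
        have hj : 2 * (n + 1) = 2 * n + 2 := by ring
        rw [hj]
        have hji := h (show 2*n+2 ∈ Finset.range (m+1) from Finset.mem_range.mpr (by omega))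
        have hstrict : x (2 * n + 1) < x (2 * n + 2) := by
          have := h2 (2 * n) (by omega)
          omega
        have hA : (2 * n + 2 = 0 ∨ x (2 * n + 2 - 1) < x (2 * n + 2)) := by
          right
          simpa using hstrict
        simp only [not_and, not_or, not_lt] at hji
        have hB := hji hA
        have hle2 := h1 (2 * n + 2)
        constructor
        · omega
        · omega
    constructor
    · rcases Nat.even_or_odd m with ⟨k, hk⟩ | ho
      · exfalso
        have := key k (by omega)
        omega
      · exact ho
    · intro i hi
      have := key i (by
        obtain ⟨l, hl⟩ := (key 0 (by omega))
        omega)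
      exact this.2
  · rintro ⟨hodd, heq⟩ i hi ⟨hA, hB⟩
    obtain ⟨l, hl⟩ := hodd
    rw [Finset.mem_range] at hi
    rcases Nat.even_or_odd i with ⟨k, hk⟩ | ⟨k, hk⟩
    · have hik : i = 2 * k := by omega
      subst hik
      have he := heq k (by omega)
      rcases hB with hB | hB
      · omega
      · omega
    · have hik : i = 2 * k + 1 := by omega
      subst hik
      have he := heq k (by omega)
      rcases hA with hA | hA
      · omega
      · simp only [Nat.add_sub_cancel] at hA
        omega
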